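/- arXiv:1304.4773 — 2 statements merged into one kernel-verified Lean document; each statement's English description precedes it below -/
import Mathlib

section
/- Fix a penalty parameter λ > 0 and a subset size h with 1 ≤ h ≤ n. The sparse LTS estimator is defined for a sample Z = (X, y) with X ∈ ℝ^{n×p}, y ∈ ℝ^n as a minimizer over β ∈ ℝ^p of Σ_{i=1}^{h} (r²(β))_{i:n} + h λ Σ_{j=1}^{p} |β_j|, where r²(β) = ((y₁ − x₁'β)², …, (y_n − x_n'β)²)' and (r²(β))_{1:n} ≤ ⋯ ≤ (r²(β))_{n:n} are the order statistics of the squared residuals. Then for every sample Z, the replacement finite-sample breakdown point of the sparse LTS estimator equals (n − h + 1)/n. -/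
open Finset

/-- The `i`-th order statistic of the vector `r`, i.e. the `i`-th entry after sorting
the entries of `r` in nondecreasing order. -/
noncomputable def orderStat {n : ℕ} (r : Fin n → ℝ) (i : Fin n) : ℝ :=
  r (Tuple.sort r i)

/-- The sum of the `h` smallest entries (order statistics) of the vector `r`. -/
noncomputable def trimmedSum {n : ℕ} (h : ℕ) (r : Fin n → ℝ) : ℝ :=
  ∑ i ∈ Finset.univ.filter (fun i : Fin n => (i : ℕ) < h), orderStat r i

/-- The L¹ norm of a coefficient vector `β ∈ ℝ^p`. -/
noncomputable def l1norm {p : ℕ} (β : Fin p → ℝ) : ℝ := ∑ j, |β j|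

/-- The Euclidean (L²) norm of a coefficient vector `β ∈ ℝ^p`. -/
noncomputable def euclNorm {p : ℕ} (β : Fin p → ℝ) : ℝ := Real.sqrt (∑ j, β j ^ 2)

/-- `Corrupt m X X' y y'` : the sample `(X', y')` is obtained from the sample `(X, y)` by
replacing (at most) `m` of the `n` observations `(xᵢ', yᵢ)` by arbitrary values. -/
def Corrupt {n p : ℕ} (m : ℕ) (X X' : Fin n → Fin p → ℝ) (y y' : Fin n → ℝ) : Prop :=
  ∃ s : Finset (Fin n), s.card ≤ m ∧ ∀ i ∉ s, (∀ j, X' i j = X i j) ∧ y' i = y i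

/-- The sparse LTS objective function
`Σ_{i=1}^{h} (r²(β))_{i:n} + h λ Σ_j |β_j|`, where `r²(β)` is the vector of squared
residuals `(yᵢ − xᵢ'β)²`. -/
noncomputable def QSparseLTS {n p : ℕ} (lam : ℝ) (h : ℕ)
    (X : Fin n → Fin p → ℝ) (y : Fin n → ℝ) (β : Fin p → ℝ) : ℝ :=
  trimmedSum h (fun i => (y i - ∑ j, X i j * β j) ^ 2) + (h : ℝ) * lam * l1norm β

/-- `BreaksDown est X y m` : the supremum of `‖est(Z̃)‖₂` over all samples `Z̃` obtained
from `Z = (X, y)` by replacing `m` observations by arbitrary values is infinite. -/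
def BreaksDown {n p : ℕ} (est : (Fin n → Fin p → ℝ) → (Fin n → ℝ) → Fin p → ℝ)
    (X : Fin n → Fin p → ℝ) (y : Fin n → ℝ) (m : ℕ) : Prop :=
  ∀ M : ℝ, ∃ X' y', Corrupt m X X' y y' ∧ M < euclNorm (est X' y')

/-- The replacement finite-sample breakdown point
`ε*(est; Z) = min{ m/n : sup_{Z̃} ‖est(Z̃)‖₂ = ∞ }`. -/
noncomputable def breakdownPoint {n p : ℕ}
    (est : (Fin n → Fin p → ℝ) → (Fin n → ℝ) → Fin p → ℝ)
    (X : Fin n → Fin p → ℝ) (y : Fin n → ℝ) : ℝ :=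
  ((sInf {m : ℕ | BreaksDown est X y m} : ℕ) : ℝ) / n

lemma filter_lt_eq_image {n m : ℕ} (hm : m ≤ n) :
    (Finset.univ.filter (fun i : Fin n => (i : ℕ) < m)) =
      Finset.univ.image (Fin.castLE hm) := by
  ext i
  simp only [mem_filter, mem_univ, true_and, mem_image]
  constructor
  · intro hi
    exact ⟨⟨(i : ℕ), hi⟩, rfl⟩
  · rintro ⟨k, rfl⟩
    exact k.2

lemma card_filter_lt {n : ℕ} (m : ℕ) (hm : m ≤ n) :
    (Finset.univ.filter (fun i : Fin n => (i : ℕ) < m)).card = m := by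
  rw [filter_lt_eq_image hm,
    Finset.card_image_of_injective _ (Fin.strictMono_castLE hm).injective,
    card_univ, Fintype.card_fin]

lemma trimmedSum_eq_sum_image {n h : ℕ} (r : Fin n → ℝ) :
    trimmedSum h r =
      ∑ i ∈ (Finset.univ.filter (fun i : Fin n => (i : ℕ) < h)).image (Tuple.sort r), r i := by
  rw [Finset.sum_image (fun a _ b _ hab => (Tuple.sort r).injective hab)]
  rfl

lemma card_trim_image {n h : ℕ} (hhn : h ≤ n) (r : Fin n → ℝ) :
    ((Finset.univ.filter (fun i : Fin n => (i : ℕ) < h)).image (Tuple.sort r)).card = h := by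
  rw [Finset.card_image_of_injective _ (Tuple.sort r).injective, card_filter_lt h hhn]

lemma strictMono_val_le {h n : ℕ} {f : Fin h → Fin n} (hf : StrictMono f) :
    ∀ (k : ℕ) (hk : k < h), k ≤ (f ⟨k, hk⟩ : ℕ) := by
  intro k
  induction k with
  | zero => intro hk; exact Nat.zero_le _
  | succ k ih =>
    intro hk
    have h1 : k < h := Nat.lt_of_succ_lt hk
    have h2 : f ⟨k, h1⟩ < f ⟨k + 1, hk⟩ := hf (by simp [Fin.lt_def])
    have h3 : (f ⟨k, h1⟩ : ℕ) < (f ⟨k + 1, hk⟩ : ℕ) := h2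
    have h4 := ih h1
    omega

lemma sum_mono_lower {n h : ℕ} (hhn : h ≤ n) {g : Fin n → ℝ} (hg : Monotone g)
    {t : Finset (Fin n)} (ht : t.card = h) :
    ∑ k ∈ Finset.univ.filter (fun i : Fin n => (i : ℕ) < h), g k ≤ ∑ k ∈ t, g k := by
  have himg : Finset.univ.image (t.orderEmbOfFin ht) = t := by
    ext x
    simp only [Finset.mem_image, Finset.mem_univ, true_and]
    constructor
    · rintro ⟨j, rfl⟩; exact Finset.orderEmbOfFin_mem t ht j
    · intro hx
      have hx' : x ∈ Set.range (t.orderEmbOfFin ht) := by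
        rw [Finset.range_orderEmbOfFin]; exact hx
      obtain ⟨j, hj⟩ := hx'
      exact ⟨j, hj⟩
  rw [filter_lt_eq_image hhn, ← himg,
    Finset.sum_image (fun a _ b _ hab => (Fin.strictMono_castLE hhn).injective hab),
    Finset.sum_image (fun a _ b _ hab => (t.orderEmbOfFin ht).injective hab)]
  refine Finset.sum_le_sum fun j _ => hg ?_
  rw [Fin.le_def]
  simpa using strictMono_val_le (t.orderEmbOfFin ht).strictMono (j : ℕ) j.2

lemma trimmedSum_le_sum {n h : ℕ} (hhn : h ≤ n) (r : Fin n → ℝ)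
    {s : Finset (Fin n)} (hs : s.card = h) :
    trimmedSum h r ≤ ∑ i ∈ s, r i := by
  classical
  have hmono : Monotone (r ∘ Tuple.sort r) := Tuple.monotone_sort r
  have h2 : ∑ i ∈ s, r i = ∑ k ∈ s.image (Tuple.sort r).symm, (r ∘ Tuple.sort r) k := by
    rw [Finset.sum_image (fun a _ b _ hab => (Tuple.sort r).symm.injective hab)]
    simp
  have hcard : (s.image (Tuple.sort r).symm).card = h := by
    rw [Finset.card_image_of_injective _ (Tuple.sort r).symm.injective, hs]
  rw [h2]
  exact sum_mono_lower hhn hmono hcard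

lemma trimmedSum_nonneg {n h : ℕ} {r : Fin n → ℝ} (hr : ∀ i, 0 ≤ r i) :
    0 ≤ trimmedSum h r :=
  Finset.sum_nonneg fun i _ => hr _

lemma trimmedSum_le_univ_sum {n h : ℕ} {r : Fin n → ℝ} (hr : ∀ i, 0 ≤ r i) :
    trimmedSum h r ≤ ∑ i, r i := by
  rw [trimmedSum_eq_sum_image]
  exact Finset.sum_le_sum_of_subset_of_nonneg (Finset.subset_univ _) fun i _ _ => hr i

lemma le_trimmedSum {n h : ℕ} (hhn : h ≤ n) {r : Fin n → ℝ}
    (hr : ∀ i, 0 ≤ r i) {t : Finset (Fin n)} (ht : t.card < h)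
    {v : ℝ} (hb : ∀ i ∉ t, v ≤ r i) : v ≤ trimmedSum h r := by
  rw [trimmedSum_eq_sum_image]
  have hS := card_trim_image hhn r
  have hex : ∃ i ∈ (Finset.univ.filter (fun i : Fin n => (i : ℕ) < h)).image (Tuple.sort r),
      i ∉ t := by
    by_contra hcon
    push_neg at hcon
    have := Finset.card_le_card hcon
    omega
  obtain ⟨i₀, hi₀S, hi₀t⟩ := hex
  calc v ≤ r i₀ := hb i₀ hi₀t
    _ ≤ _ := Finset.single_le_sum (fun i _ => hr i) hi₀S


lemma euclNorm_le_l1norm {p : ℕ} (β : Fin p → ℝ) : euclNorm β ≤ l1norm β := by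
  have h1 : ∑ j, β j ^ 2 ≤ (∑ j, |β j|) ^ 2 := by
    have := Finset.sum_sq_le_sq_sum_of_nonneg
      (s := (univ : Finset (Fin p))) (f := fun j => |β j|) (fun i _ => abs_nonneg _)
    simpa [sq_abs] using this
  have h2 : 0 ≤ l1norm β := Finset.sum_nonneg fun i _ => abs_nonneg _
  calc euclNorm β ≤ Real.sqrt ((l1norm β) ^ 2) := Real.sqrt_le_sqrt h1
    _ = l1norm β := Real.sqrt_sq h2

lemma abs_le_euclNorm {p : ℕ} (β : Fin p → ℝ) (j : Fin p) : |β j| ≤ euclNorm β := by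
  rw [← Real.sqrt_sq_eq_abs]
  exact Real.sqrt_le_sqrt (Finset.single_le_sum (fun i _ => sq_nonneg (β i)) (mem_univ j))

/-- The sparse LTS estimator, with penalty parameter `λ > 0` and subset size `1 ≤ h ≤ n`,
i.e. any estimator that, for every sample, minimizes the sparse LTS objective, has
replacement finite-sample breakdown point `(n − h + 1)/n` at every sample `Z = (X, y)`. -/
theorem breakdown_point_sparseLTS
    {n p h : ℕ} (hp : 1 ≤ p) (hh1 : 1 ≤ h) (hhn : h ≤ n)
    (lam : ℝ) (hlam : 0 < lam)
    (est : (Fin n → Fin p → ℝ) → (Fin n → ℝ) → Fin p → ℝ)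
    (hest : ∀ (X : Fin n → Fin p → ℝ) (y : Fin n → ℝ) (β : Fin p → ℝ),
      QSparseLTS lam h X y (est X y) ≤ QSparseLTS lam h X y β)
    (X : Fin n → Fin p → ℝ) (y : Fin n → ℝ) :
    breakdownPoint est X y = ((n : ℝ) - h + 1) / n := by
  classical
  have hhl : (0 : ℝ) < (h : ℝ) * lam := by
    have : (0 : ℝ) < (h : ℝ) := by exact_mod_cast hh1
    positivity
  -- Part 2: no breakdown when at most n - h observations are replaced
  have hnot : ∀ k, k < n - h + 1 → ¬ BreaksDown est X y k := by
    intro k hk hBD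
    set C : ℝ := ∑ i, (y i) ^ 2 with hC
    have hC0 : 0 ≤ C := Finset.sum_nonneg fun i _ => sq_nonneg _
    obtain ⟨X', y', ⟨s, hscard, hsgood⟩, hM⟩ := hBD (C / ((h : ℝ) * lam))
    have hsc : h ≤ sᶜ.card := by
      rw [Finset.card_compl, Fintype.card_fin]
      omega
    obtain ⟨G, hGsub, hGcard⟩ := Finset.exists_subset_card_eq hsc
    set β := est X' y' with hβ
    have hq := hest X' y' 0
    have hQ0 : QSparseLTS lam h X' y' 0 ≤ C := by
      have hres : (fun i => (y' i - ∑ j, X' i j * (0 : Fin p → ℝ) j) ^ 2)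
          = fun i => (y' i) ^ 2 := by
        funext i; simp
      have hl1 : l1norm (0 : Fin p → ℝ) = 0 := by simp [l1norm]
      rw [QSparseLTS, hres, hl1, mul_zero, add_zero]
      calc trimmedSum h (fun i => (y' i) ^ 2) ≤ ∑ i ∈ G, (y' i) ^ 2 :=
            trimmedSum_le_sum hhn _ hGcard
        _ = ∑ i ∈ G, (y i) ^ 2 := by
            refine Finset.sum_congr rfl fun i hi => ?_
            have hins : i ∉ s := Finset.mem_compl.mp (hGsub hi)
            rw [(hsgood i hins).2]
        _ ≤ C := Finset.sum_le_sum_of_subset_of_nonneg (Finset.subset_univ _)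
            (fun i _ _ => sq_nonneg _)
    have hpen : (h : ℝ) * lam * l1norm β ≤ C := by
      have htn : 0 ≤ trimmedSum h (fun i => (y' i - ∑ j, X' i j * β j) ^ 2) :=
        trimmedSum_nonneg fun i => sq_nonneg _
      have hle := le_trans hq hQ0
      rw [QSparseLTS] at hle
      linarith
    have hl1b : l1norm β ≤ C / ((h : ℝ) * lam) := by
      rw [le_div_iff₀ hhl]
      linarith [hpen]
    have := le_trans (euclNorm_le_l1norm β) hl1b
    linarith
  -- Part 1: breakdown when n - h + 1 observations are replaced
  have hmle : n - h + 1 ≤ n := by omega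
  have hyes : BreaksDown est X y (n - h + 1) := by
    intro M
    set j₀ : Fin p := ⟨0, hp⟩ with hj₀
    set c : ℝ := max M 0 + 1 with hc
    have hc0 : 0 < c := by
      have : (0 : ℝ) ≤ max M 0 := le_max_right M 0
      linarith
    have hcM : M < c := lt_of_le_of_lt (le_max_left M 0) (by linarith [hc.le])
    set B : ℝ := ∑ i, (y i - c * X i j₀) ^ 2 with hB
    have hB0 : 0 ≤ B := Finset.sum_nonneg fun i _ => sq_nonneg _
    have harg : 0 ≤ B + (h : ℝ) * lam * c + 1 := by nlinarith
    set L : ℝ := Real.sqrt (B + (h : ℝ) * lam * c + 1) with hL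
    have hL2 : L ^ 2 = B + (h : ℝ) * lam * c + 1 := Real.sq_sqrt harg
    set X' : Fin n → Fin p → ℝ :=
      fun i j => if (i : ℕ) < n - h + 1 then (if j = j₀ then L else 0) else X i j with hX'
    set y' : Fin n → ℝ := fun i => if (i : ℕ) < n - h + 1 then L * c else y i with hy'
    refine ⟨X', y', ⟨Finset.univ.filter (fun i : Fin n => (i : ℕ) < n - h + 1),
      le_of_eq (card_filter_lt _ hmle), ?_⟩, ?_⟩
    · intro i hi
      have hig : ¬ (i : ℕ) < n - h + 1 := by simpa using hi
      exact ⟨fun j => by simp [hX', hig, show ¬ (i:ℕ) ≤ n - h by omega], by simp [hy', hig, show ¬ (i:ℕ) ≤ n - h by omega]⟩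
    · by_contra hcon
      push_neg at hcon
      set β := est X' y' with hβ
      have hβ0 : β j₀ ≤ M := le_trans (le_abs_self _) (le_trans (abs_le_euclNorm β j₀) hcon)
      set r : Fin n → ℝ := fun i => (y' i - ∑ j, X' i j * β j) ^ 2 with hr
      have hrbad : ∀ i : Fin n, (i : ℕ) < n - h + 1 → r i = L ^ 2 * (c - β j₀) ^ 2 := by
        intro i hi
        have hsum : ∑ j, X' i j * β j = L * β j₀ := by
          have hterm : ∀ j, X' i j * β j = if j = j₀ then L * β j₀ else 0 := by
            intro j
            by_cases hj : j = j₀ <;> simp [hX', hi, hj, show (i:ℕ) ≤ n - h by omega]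
          rw [Finset.sum_congr rfl (fun j _ => hterm j), Finset.sum_ite_eq']
          simp
        have hyv : y' i = L * c := by simp [hy', hi, show (i:ℕ) ≤ n - h by omega]
        rw [hr]
        simp only [hsum, hyv]
        ring
      have hlow : L ^ 2 ≤ trimmedSum h r := by
        refine le_trimmedSum hhn (fun i => sq_nonneg _)
          (t := Finset.univ.filter (fun i : Fin n => ¬ (i : ℕ) < n - h + 1)) ?_ ?_
        · have hcompl : Finset.univ.filter (fun i : Fin n => ¬ (i : ℕ) < n - h + 1)
              = (Finset.univ.filter (fun i : Fin n => (i : ℕ) < n - h + 1))ᶜ := by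
            ext i; simp
          rw [hcompl, Finset.card_compl, card_filter_lt _ hmle, Fintype.card_fin]
          omega
        · intro i hi
          have hi' : (i : ℕ) < n - h + 1 := by simpa using hi
          have hrb : (y' i - ∑ j, X' i j * β j) ^ 2 = L ^ 2 * (c - β j₀) ^ 2 := hrbad i hi'
          rw [hrb]
          have h2 : M + 1 ≤ c := by
            rw [hc]; have := le_max_left M 0; linarith
          have h3 : (1 : ℝ) ≤ c - β j₀ := by linarith
          have h1 : (1 : ℝ) ≤ (c - β j₀) ^ 2 := by nlinarith
          nlinarith [sq_nonneg L]
      set βs : Fin p → ℝ := fun j => if j = j₀ then c else 0 with hβs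
      have hl1s : l1norm βs = c := by
        have hterm : ∀ j, |βs j| = if j = j₀ then c else 0 := by
          intro j
          by_cases hj : j = j₀ <;> simp [hβs, hj, abs_of_pos hc0]
        rw [l1norm, Finset.sum_congr rfl (fun j _ => hterm j), Finset.sum_ite_eq']
        simp
      have hrs : ∀ i, (y' i - ∑ j, X' i j * βs j) ^ 2 ≤ (y i - c * X i j₀) ^ 2 := by
        intro i
        by_cases hi : (i : ℕ) < n - h + 1
        · have hsum : ∑ j, X' i j * βs j = L * c := by
            have hterm : ∀ j, X' i j * βs j = if j = j₀ then L * c else 0 := by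
              intro j
              by_cases hj : j = j₀ <;> simp [hX', hβs, hi, hj, show (i:ℕ) ≤ n - h by omega]
            rw [Finset.sum_congr rfl (fun j _ => hterm j), Finset.sum_ite_eq']
            simp
          rw [hsum]
          simp [hy', hi, show (i:ℕ) ≤ n - h by omega]
          positivity
        · have hsum : ∑ j, X' i j * βs j = c * X i j₀ := by
            have hterm : ∀ j, X' i j * βs j = if j = j₀ then c * X i j₀ else 0 := by
              intro j
              by_cases hj : j = j₀ <;> simp [hX', hβs, hi, hj, mul_comm, show ¬ (i:ℕ) ≤ n - h by omega]
            rw [Finset.sum_congr rfl (fun j _ => hterm j), Finset.sum_ite_eq']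
            simp
          rw [hsum]
          simp [hy', hi, show ¬ (i:ℕ) ≤ n - h by omega]
      have hQs : QSparseLTS lam h X' y' βs ≤ B + (h : ℝ) * lam * c := by
        rw [QSparseLTS, hl1s]
        have h1 : trimmedSum h (fun i => (y' i - ∑ j, X' i j * βs j) ^ 2) ≤ B := by
          calc trimmedSum h (fun i => (y' i - ∑ j, X' i j * βs j) ^ 2)
              ≤ ∑ i, (y' i - ∑ j, X' i j * βs j) ^ 2 :=
                trimmedSum_le_univ_sum fun i => sq_nonneg _
            _ ≤ B := Finset.sum_le_sum fun i _ => hrs i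
        linarith
      have hQβ : B + (h : ℝ) * lam * c + 1 ≤ QSparseLTS lam h X' y' β := by
        rw [QSparseLTS]
        have hpen : 0 ≤ (h : ℝ) * lam * l1norm β :=
          mul_nonneg hhl.le (Finset.sum_nonneg fun i _ => abs_nonneg _)
        have := hlow
        rw [hL2] at this
        exact le_add_of_le_of_nonneg this hpen
      have := hest X' y' βs
      linarith
  have hsInf : sInf {m : ℕ | BreaksDown est X y m} = n - h + 1 := by
    apply le_antisymm
    · exact Nat.sInf_le hyes
    · refine le_csInf ⟨_, hyes⟩ fun k hk => ?_
      by_contra hlt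
      push_neg at hlt
      exact hnot k hlt hk
  rw [breakdownPoint, hsInf, Nat.cast_add, Nat.cast_sub hhn, Nat.cast_one]
end

section
/- Let ρ: ℝ → ℝ be convex, symmetric, with ρ(0) = 0 and ρ(x) > 0 for x ≠ 0, let λ > 0 and 1 ≤ h ≤ n. Let Z̃ = Z_{γ,τ} be a sample of n observations in which at least m = n − h + 1 observations equal the point z(γ, τ) = ((τ, 0, …, 0)', γτ) with γ, τ > 0. Then for every β = (β₁, …, β_p)' ∈ ℝ^p with ‖β‖₂ ≤ γ − 1, the objective Q_{Z̃}(β) = Σ_{i=1}^{h} (ρ(ỹ − X̃β))_{i:n} + h λ Σ_{j=1}^{p} |β_j| satisfies Q_{Z̃}(β) ≥ ρ(τ(γ − β₁)) ≥ ρ(τ). -/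
open Finset

/-- The trimmed penalized objective function
`Q_Z̃(β) = Σ_{i=1}^{h} (ρ(ỹ − X̃β))_{i:n} + h λ Σ_j |β_j|` with loss `ρ`. -/
noncomputable def QGen {n p : ℕ} (ρ : ℝ → ℝ) (lam : ℝ) (h : ℕ)
    (X : Fin n → Fin p → ℝ) (y : Fin n → ℝ) (β : Fin p → ℝ) : ℝ :=
  trimmedSum h (fun i => ρ (y i - ∑ j, X i j * β j)) + (h : ℝ) * lam * l1norm β

lemma rho_mono (ρ : ℝ → ℝ) (hconv : ConvexOn ℝ Set.univ ρ) (hsym : ∀ x : ℝ, ρ (-x) = ρ x)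
    {a b : ℝ} (ha : 0 ≤ a) (hab : a ≤ b) : ρ a ≤ ρ b := by
  rcases eq_or_lt_of_le (ha.trans hab) with hb | hb
  · have : a = 0 := le_antisymm (hab.trans hb.symm.le) ha
    simp [this, ← hb]
  · set t : ℝ := (b + a) / (2 * b) with ht
    have hb0 : (0:ℝ) < 2 * b := by linarith
    have ht0 : 0 ≤ t := by positivity
    have ht1 : 0 ≤ 1 - t := by
      rw [ht]; rw [sub_nonneg, div_le_one hb0]; linarith
    have hsum : t + (1 - t) = 1 := by ring
    have hcomb : t • b + (1 - t) • (-b) = a := by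
      field_simp [ht]
      have h2 : t * (2 * b) = b + a := by rw [ht]; exact div_mul_cancel₀ _ hb0.ne'
      linear_combination h2
    have := hconv.2 (Set.mem_univ b) (Set.mem_univ (-b)) ht0 ht1 hsum
    rw [hcomb, hsym] at this
    calc ρ a ≤ t * ρ b + (1 - t) * ρ b := this
    _ = ρ b := by ring

/-- Inequality (A.3) of the paper: if at least `m = n − h + 1` observations of the sample
`Z̃ = (X̃, ỹ)` equal the point `z(γ, τ) = ((τ, 0, …, 0)', γτ)` with `γ, τ > 0`, then for
every `β` with `‖β‖₂ ≤ γ − 1` the trimmed penalized objective satisfies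
`Q_Z̃(β) ≥ ρ(τ(γ − β₁)) ≥ ρ(τ)`. -/
theorem objective_lower_bound_contaminated
    {n p h : ℕ} (hp : 1 ≤ p) (hh1 : 1 ≤ h) (hhn : h ≤ n)
    (ρ : ℝ → ℝ) (hconv : ConvexOn ℝ Set.univ ρ) (hsym : ∀ x : ℝ, ρ (-x) = ρ x)
    (hzero : ρ 0 = 0) (hpos : ∀ x : ℝ, x ≠ 0 → 0 < ρ x)
    (lam : ℝ) (hlam : 0 < lam)
    (X : Fin n → Fin p → ℝ) (y : Fin n → ℝ)
    (γ τ : ℝ) (hγ : 0 < γ) (hτ : 0 < τ)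
    (hrep : ∃ s : Finset (Fin n), n - h + 1 ≤ s.card ∧
      ∀ i ∈ s, (∀ j : Fin p, X i j = if (j : ℕ) = 0 then τ else 0) ∧ y i = γ * τ) :
    ∀ β : Fin p → ℝ, euclNorm β ≤ γ - 1 →
      ρ (τ * (γ - β ⟨0, hp⟩)) ≤ QGen ρ lam h X y β ∧
      ρ τ ≤ ρ (τ * (γ - β ⟨0, hp⟩)) := by
  
  obtain ⟨s, hscard, hs⟩ := hrep
  intro β hβ
  -- β₀ ≤ γ - 1
  have hβ0 : β ⟨0, hp⟩ ≤ γ - 1 := by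
    refine le_trans ?_ hβ
    unfold euclNorm
    have h1 : β ⟨0, hp⟩ ≤ |β ⟨0, hp⟩| := le_abs_self _
    have h2 : |β ⟨0, hp⟩| = Real.sqrt (β ⟨0, hp⟩ ^ 2) := (Real.sqrt_sq_eq_abs _).symm
    refine h1.trans (h2.le.trans (Real.sqrt_le_sqrt ?_))
    exact Finset.single_le_sum (fun j _ => sq_nonneg (β j)) (Finset.mem_univ _)
  have hτγ : τ ≤ τ * (γ - β ⟨0, hp⟩) := by nlinarith
  have hmono := rho_mono ρ hconv hsym hτ.le hτγ
  refine ⟨?_, hmono⟩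
  -- nonnegativity of ρ
  have hρnn : ∀ x : ℝ, 0 ≤ ρ x := by
    intro x
    rcases eq_or_ne x 0 with hx | hx
    · simp [hx, hzero]
    · exact (hpos x hx).le
  set r : Fin n → ℝ := fun i => ρ (y i - ∑ j, X i j * β j) with hr
  -- the set of the h smallest indices
  set F : Finset (Fin n) := Finset.univ.filter (fun i : Fin n => (i : ℕ) < h) with hF
  set T : Finset (Fin n) := F.image (Tuple.sort r) with hT
  have hFcard : F.card = h := by
    rw [hF]
    rw [← Finset.card_image_of_injective _ Fin.val_injective]
    have : (Finset.univ.filter (fun i : Fin n => (i : ℕ) < h)).image Fin.val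
        = Finset.range h := by
      ext m
      simp only [Finset.mem_image, Finset.mem_filter, Finset.mem_univ, true_and,
        Finset.mem_range]
      constructor
      · rintro ⟨i, hi, rfl⟩; exact hi
      · intro hm; exact ⟨⟨m, lt_of_lt_of_le hm hhn⟩, hm, rfl⟩
    rw [this, Finset.card_range]
  have hTcard : T.card = h := by
    rw [hT, Finset.card_image_of_injective _ (Tuple.sort r).injective, hFcard]
  -- T ∩ s is nonempty
  have hinter : (T ∩ s).Nonempty := by
    rw [← Finset.card_pos]
    have hun : (T ∪ s).card ≤ n := by
      have := Finset.card_le_univ (T ∪ s)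
      simpa using this
    have := Finset.card_union_add_card_inter T s
    have hns : n - h + h = n := Nat.sub_add_cancel hhn
    omega
  obtain ⟨i₀, hi₀⟩ := hinter
  rw [Finset.mem_inter] at hi₀
  obtain ⟨hi₀T, hi₀s⟩ := hi₀
  obtain ⟨hXi, hyi⟩ := hs i₀ hi₀s
  -- value of r at i₀
  have hri₀ : r i₀ = ρ (τ * (γ - β ⟨0, hp⟩)) := by
    have hsum : (∑ j, X i₀ j * β j) = τ * β ⟨0, hp⟩ := by
      rw [Finset.sum_eq_single (⟨0, hp⟩ : Fin p)]
      · rw [hXi]; simp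
      · intro j _ hj
        rw [hXi]
        have : (j : ℕ) ≠ 0 := by
          intro hc
          exact hj (Fin.ext hc)
        simp [this]
      · simp
    rw [hr]
    simp only [hsum, hyi]
    ring_nf
  -- trimmedSum bound
  have htrim : ρ (τ * (γ - β ⟨0, hp⟩)) ≤ trimmedSum h r := by
    obtain ⟨k, hkF, hk⟩ := Finset.mem_image.mp hi₀T
    have : r i₀ ≤ trimmedSum h r := by
      unfold trimmedSum orderStat
      rw [← hk]
      have hrnn : ∀ i : Fin n, 0 ≤ r (Tuple.sort r i) := fun i => hρnn _
      have hkF' : k ∈ Finset.univ.filter (fun i : Fin n => (i : ℕ) < h) := by rwa [← hF]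
      exact Finset.single_le_sum (f := fun i => r (Tuple.sort r i)) (fun i _ => hrnn i) hkF'
    rwa [hri₀] at this
  have hpen : 0 ≤ (h : ℝ) * lam * l1norm β := by
    have : 0 ≤ l1norm β := Finset.sum_nonneg fun j _ => abs_nonneg _
    positivity
  unfold QGen
  rw [← hr]
  linarith
end
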